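/- Let G be a finite dominant set of monomials with q = |G| elements, and let h be the total degree of lcm(G). Then for every subset L ⊆ G with |L| = i and total degree of lcm(L) equal to j, one has h − q ≥ j − i. -/

import Mathlib

open Finset

variable {X : Type*} [DecidableEq X]

/-- The lcm of a finite set of monomials (monomials = finitely supported
exponent functions): pointwise maximum of exponents. -/
noncomputable def mlcm (L : Finset (X →₀ ℕ)) : X →₀ ℕ := L.sup id

/-- `m` is dominant with respect to `G`: some variable `x` appears in `m`
with exponent at least `k > 0` while every other element of `G` has
`x`-exponent `< k`. -/
def Dominant (G : Finset (X →₀ ℕ)) (m : X →₀ ℕ) : Prop :=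
  ∃ x : X, ∃ k : ℕ, 0 < k ∧ k ≤ m x ∧ ∀ m' ∈ G, m' ≠ m → m' x < k

/-- Total degree of a monomial: sum of its exponents. -/
def mdeg (m : X →₀ ℕ) : ℕ := m.sum fun _ e => e

lemma mlcm_apply (S : Finset (X →₀ ℕ)) (x : X) : mlcm S x = S.sup (fun m => m x) := by
  classical
  induction S using Finset.induction with
  | empty => simp [mlcm]; rfl
  | insert h _ _ ih => simp [mlcm, Finsupp.sup_apply, Finset.sup_insert, ← ih]

lemma mdeg_lt_of_le_of_lt {f g : X →₀ ℕ} (hle : f ≤ g) {x : X} (hx : f x < g x) :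
    mdeg f < mdeg g := by
  have hsub : f.support ⊆ g.support := by
    intro y hy
    simp only [Finsupp.mem_support_iff] at *
    exact fun h => hy (Nat.le_antisymm (h ▸ hle y) (Nat.zero_le _))
  have hxg : x ∈ g.support := by
    simp only [Finsupp.mem_support_iff]
    omega
  have h1 : mdeg f = ∑ y ∈ g.support, f y := by
    rw [mdeg, Finsupp.sum]
    exact Finset.sum_subset hsub (fun y _ hy => by simpa using Finsupp.notMem_support_iff.mp hy)
  rw [h1, mdeg, Finsupp.sum]
  exact Finset.sum_lt_sum (fun i _ => hle i) ⟨x, hxg, hx⟩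

theorem regularity_bound_of_dominant (G : Finset (X →₀ ℕ))
    (hdom : ∀ m ∈ G, Dominant G m)
    (L : Finset (X →₀ ℕ)) (hL : L ⊆ G) :
    (mdeg (mlcm G) : ℤ) - (G.card : ℤ) ≥ (mdeg (mlcm L) : ℤ) - (L.card : ℤ) := by
  classical
  -- generalize: prove for all S with L ⊆ S ⊆ G, by strong induction on card S
  suffices h : ∀ n (S : Finset (X →₀ ℕ)), S.card = n → L ⊆ S → S ⊆ G →
      (mdeg (mlcm S) : ℤ) - (S.card : ℤ) ≥ (mdeg (mlcm L) : ℤ) - (L.card : ℤ) from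
    h G.card G rfl hL (subset_refl G)
  intro n
  induction n with
  | zero =>
    intro S hcard hLS _
    have hS : S = ∅ := Finset.card_eq_zero.mp hcard
    have : L = S := by rw [hS]; exact Finset.subset_empty.mp (hS ▸ hLS)
    rw [this]
  | succ n ih =>
    intro S hcard hLS hSG
    by_cases hEq : S = L
    · rw [hEq]
    · obtain ⟨m, hmS, hmL⟩ : ∃ m ∈ S, m ∉ L := by
        by_contra h
        push_neg at h
        exact hEq (Finset.Subset.antisymm h hLS)
      have hstep : mdeg (mlcm (S.erase m)) < mdeg (mlcm S) := by
        obtain ⟨x, k, hk0, hkm, hdomm⟩ := hdom m (hSG hmS)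
        have hlt : mlcm (S.erase m) x < mlcm S x := by
          rw [mlcm_apply, mlcm_apply]
          have h1 : S.sup (fun m' => m' x) ≥ k := le_trans hkm (Finset.le_sup (f := fun m' => m' x) hmS)
          have h2 : (S.erase m).sup (fun m' => m' x) < k := by
            apply Finset.sup_lt_iff (by simpa using hk0) |>.mpr
            intro m' hm'
            exact hdomm m' (hSG (Finset.mem_of_mem_erase hm')) (Finset.ne_of_mem_erase hm')
          exact lt_of_lt_of_le h2 h1
        exact mdeg_lt_of_le_of_lt (Finset.sup_mono (Finset.erase_subset m S)) hlt
      have hih := ih (S.erase m) (by rw [Finset.card_erase_of_mem hmS, hcard]; rfl)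
        (fun y hy => Finset.mem_erase.mpr ⟨fun h => hmL (h ▸ hy), hLS hy⟩)
        (fun y hy => hSG (Finset.mem_of_mem_erase hy))
      have hce : (S.erase m).card = S.card - 1 := Finset.card_erase_of_mem hmS
      have hpos : 0 < S.card := Finset.card_pos.mpr ⟨m, hmS⟩
      push_cast [hce] at hih ⊢
      omega
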